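/- If K₁ and K₂ are classes of matrices each closed under subdirect products (and containing trivial matrices as empty subdirect products), then the class K₁ ⊗ K₂ = {⟨A₁ ⊗ A₂, F₁ × F₂⟩ : ⟨A_i, F_i⟩ ∈ K_i} closed under isomorphism is also closed under subdirect products. -/

import Mathlib

/-- An algebraic language: a family of operation symbols indexed by arity.
(Following the paper, there are no nullary symbols; constants are treated as
unary constant operations where needed.) -/
structure Lang : Type 1 where
  ops : ℕ → Type

/-- An algebra for a language `L`. -/
structure Alg (L : Lang) : Type 1 where
  carrier : Type
  interp : ∀ {n : ℕ}, L.ops n → (Fin n → carrier) → carrier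

/-- Terms of the language `L` over a type `V` of variables. -/
inductive Term (L : Lang) (V : Type) : Type
  | var : V → Term L V
  | op : ∀ {n : ℕ}, L.ops n → (Fin n → Term L V) → Term L V

/-- Evaluation of a term in an algebra under an assignment of the variables. -/
def Term.eval {L : Lang} {V : Type} (A : Alg L) (v : V → A.carrier) :
    Term L V → A.carrier
  | .var x => v x
  | .op f ts => A.interp f (fun i => Term.eval A v (ts i))

/-- `θ` is a congruence of the algebra `A`. -/
def IsCongruence {L : Lang} (A : Alg L) (θ : A.carrier → A.carrier → Prop) : Prop :=
  Equivalence θ ∧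
    ∀ (n : ℕ) (f : L.ops n) (x y : Fin n → A.carrier),
      (∀ i, θ (x i) (y i)) → θ (A.interp f x) (A.interp f y)

/-- A relation `θ` is compatible with a subset `F`: related elements are either
both in or both out of `F` (stated one-sidedly; symmetry gives the rest). -/
def Compatible {L : Lang} (A : Alg L) (F : Set A.carrier)
    (θ : A.carrier → A.carrier → Prop) : Prop :=
  ∀ a b : A.carrier, θ a b → a ∈ F → b ∈ F

/-- `θ` is the Leibniz congruence of `F` on `A`: the largest congruence of `A`
compatible with `F`. -/
def IsLeibniz {L : Lang} (A : Alg L) (F : Set A.carrier)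
    (θ : A.carrier → A.carrier → Prop) : Prop :=
  IsCongruence A θ ∧ Compatible A F θ ∧
    ∀ θ', IsCongruence A θ' → Compatible A F θ' → ∀ a b, θ' a b → θ a b

/-- The non-indexed product language of a family of languages: its `n`-ary
symbols are `I`-indexed families of `n`-ary terms of the respective languages. -/
def prodLang {ι : Type} (L : ι → Lang) : Lang where
  ops n := ∀ i, Term (L i) (Fin n)

/-- The non-indexed product of a family of algebras: the family-of-terms
operations act coordinatewise. -/
def prodAlg {ι : Type} {L : ι → Lang} (A : ∀ i, Alg (L i)) : Alg (prodLang L) where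
  carrier := ∀ i, (A i).carrier
  interp f x i := Term.eval (A i) (fun k => x k i) (f i)

/-- A subset `S` of an algebra is closed under the operations. -/
def OpClosed {L : Lang} (A : Alg L) (S : Set A.carrier) : Prop :=
  ∀ (n : ℕ) (f : L.ops n) (x : Fin n → A.carrier),
    (∀ i, x i ∈ S) → A.interp f x ∈ S

/-- The subalgebra of `A` with universe the closed subset `S`. -/
def subAlg {L : Lang} (A : Alg L) (S : Set A.carrier) (h : OpClosed A S) :
    Alg L where
  carrier := {x // x ∈ S}
  interp f x := ⟨A.interp f (fun i => (x i).1), h _ f _ (fun i => (x i).2)⟩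

/-- The direct product of a family of algebras of the same language. -/
def directProd {L : Lang} {J : Type} (B : J → Alg L) : Alg L where
  carrier := ∀ j, (B j).carrier
  interp f x j := (B j).interp f (fun k => x k j)

/-- The binary non-indexed product language: its `n`-ary symbols are pairs of
`n`-ary terms of the two languages. -/
def prodLang2 (L₁ L₂ : Lang) : Lang where
  ops n := Term L₁ (Fin n) × Term L₂ (Fin n)

/-- The binary non-indexed product of two algebras: pairs of terms act
coordinatewise. -/
def prodAlg2 {L₁ L₂ : Lang} (A₁ : Alg L₁) (A₂ : Alg L₂) :
    Alg (prodLang2 L₁ L₂) where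
  carrier := A₁.carrier × A₂.carrier
  interp f x :=
    (Term.eval A₁ (fun k => (x k).1) f.1, Term.eval A₂ (fun k => (x k).2) f.2)

/-- `f` is an isomorphism of matrices from `⟨A, F⟩` onto `⟨B, G⟩`. -/
def MatIso {L : Lang} (A B : Alg L) (F : Set A.carrier) (G : Set B.carrier)
    (f : A.carrier → B.carrier) : Prop :=
  Function.Bijective f ∧
  (∀ (n : ℕ) (op : L.ops n) (x : Fin n → A.carrier),
    f (A.interp op x) = B.interp op (fun i => f (x i))) ∧
  (∀ a, a ∈ F ↔ f a ∈ G)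

/-- The class `K` of matrices is closed under subdirect products (up to
isomorphism): any matrix isomorphic to a subdirect product — a subalgebra of a
direct product with surjective projections, with the restricted product filter
— of members of `K` belongs to `K`.  (Taking the empty index set, `K` contains
the trivial matrices, as empty subdirect products.) -/
def ClosedSubdirect {L : Lang} (K : ∀ A : Alg L, Set A.carrier → Prop) : Prop :=
  ∀ (J : Type) (B : J → Alg L) (G : ∀ j, Set (B j).carrier),
    (∀ j, K (B j) (G j)) →
    ∀ (S : Set (directProd B).carrier) (hS : OpClosed (directProd B) S),
      (∀ j, Function.Surjective
        (fun s : (subAlg (directProd B) S hS).carrier => s.1 j)) →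
      ∀ (C : Alg L) (H : Set C.carrier)
        (f : (subAlg (directProd B) S hS).carrier → C.carrier),
        MatIso (subAlg (directProd B) S hS) C
          {x : (subAlg (directProd B) S hS).carrier | ∀ j, x.1 j ∈ G j} H f →
        K C H

/-- The class `K₁ ⊗ K₂`: all matrices isomorphic to a binary non-indexed
product `⟨A₁ ⊗ A₂, F₁ × F₂⟩` of a member of `K₁` and a member of `K₂`. -/
def TensorClass {L₁ L₂ : Lang}
    (K₁ : ∀ A : Alg L₁, Set A.carrier → Prop)
    (K₂ : ∀ A : Alg L₂, Set A.carrier → Prop) :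
    ∀ C : Alg (prodLang2 L₁ L₂), Set C.carrier → Prop :=
  fun C H => ∃ (A₁ : Alg L₁) (F₁ : Set A₁.carrier)
    (A₂ : Alg L₂) (F₂ : Set A₂.carrier)
    (f : (prodAlg2 A₁ A₂).carrier → C.carrier),
    K₁ A₁ F₁ ∧ K₂ A₂ F₂ ∧ MatIso (prodAlg2 A₁ A₂) C (F₁ ×ˢ F₂) H f

lemma eval_directProd {L : Lang} {J : Type} (B : J → Alg L) {V : Type}
    (v : V → (directProd B).carrier) (t : Term L V) (j : J) :
    Term.eval (directProd B) v t j = Term.eval (B j) (fun k => v k j) t := by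
  induction t with
  | var x => rfl
  | op f ts ih =>
    show (B j).interp f (fun k => Term.eval (directProd B) v (ts k) j) = _
    rw [Term.eval]
    congr 1
    funext k
    exact ih k

lemma eval_subAlg {L : Lang} (A : Alg L) (S : Set A.carrier) (h : OpClosed A S)
    {V : Type} (v : V → (subAlg A S h).carrier) (t : Term L V) :
    (Term.eval (subAlg A S h) v t).1 = Term.eval A (fun k => (v k).1) t := by
  induction t with
  | var x => rfl
  | op f ts ih =>
    show A.interp f (fun i => (Term.eval (subAlg A S h) v (ts i)).1) = _
    rw [Term.eval]
    congr 1
    funext k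
    exact ih k

/-- if `K₁` and `K₂` are classes of matrices closed under
subdirect products, then the class `K₁ ⊗ K₂` is also closed under subdirect
products. -/
theorem tensor_closed_under_subdirect_products
    {L₁ L₂ : Lang}
    (K₁ : ∀ A : Alg L₁, Set A.carrier → Prop)
    (K₂ : ∀ A : Alg L₂, Set A.carrier → Prop)
    (h₁ : ClosedSubdirect K₁) (h₂ : ClosedSubdirect K₂) :
    ClosedSubdirect (TensorClass K₁ K₂) := by
  classical
  intro J B G hKB S hS hsurj C H f hIso
  by_cases hne : S.Nonempty
  · -- main case : S is nonempty
    obtain ⟨s₀, hs₀⟩ := hne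
    choose A₁ F₁ A₂ F₂ φ hK₁j hK₂j hφ using hKB
    let e : ∀ j, (prodAlg2 (A₁ j) (A₂ j)).carrier ≃ (B j).carrier :=
      fun j => Equiv.ofBijective (φ j) (hφ j).1
    have hgf : ∀ (j : J) a, (e j).symm (φ j a) = a := fun j a => (e j).symm_apply_apply a
    have hfg : ∀ (j : J) b, φ j ((e j).symm b) = b := fun j b => (e j).apply_symm_apply b
    have hinterp : ∀ (j : J) (n : ℕ) (op : (prodLang2 L₁ L₂).ops n)
        (w : Fin n → (B j).carrier),
        (B j).interp op w
          = φ j ((prodAlg2 (A₁ j) (A₂ j)).interp op (fun i => (e j).symm (w i))) := by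
      intro j n op w
      rw [(hφ j).2.1]
      congr 1
      funext i
      exact (hfg j (w i)).symm
    -- the two projected subalgebras
    have hcl₁ : OpClosed (directProd A₁)
        {x | ∃ s ∈ S, ∀ j, ((e j).symm (s j)).1 = x j} := by
      intro n t x hx
      choose s hsS hsx using hx
      refine ⟨(directProd B).interp
          (n := n+1) ((Term.op t fun i => Term.var i.castSucc, Term.var (Fin.last n)))
          (Fin.snoc s s₀), hS _ _ _ ?_, ?_⟩
      · intro i
        induction i using Fin.lastCases with
        | last => simpa using hs₀
        | cast i => simpa using hsS i
      · intro j
        show ((e j).symm ((B j).interp _ (fun k => (Fin.snoc s s₀ : Fin (n+1) → (directProd B).carrier) k j))).1 = _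
        erw [hinterp, hgf]
        show (A₁ j).interp t (fun i => ((e j).symm ((Fin.snoc s s₀ : Fin (n+1) → (directProd B).carrier) i.castSucc j)).1)
          = (A₁ j).interp t (fun k => x k j)
        congr 1
        funext i
        rw [Fin.snoc_castSucc]
        exact hsx i j
    have hcl₂ : OpClosed (directProd A₂)
        {y | ∃ s ∈ S, ∀ j, ((e j).symm (s j)).2 = y j} := by
      intro n t y hy
      choose s hsS hsy using hy
      refine ⟨(directProd B).interp
          (n := n+1) ((Term.var (Fin.last n), Term.op t fun i => Term.var i.castSucc))
          (Fin.snoc s s₀), hS _ _ _ ?_, ?_⟩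
      · intro i
        induction i using Fin.lastCases with
        | last => simpa using hs₀
        | cast i => simpa using hsS i
      · intro j
        show ((e j).symm ((B j).interp _ (fun k => (Fin.snoc s s₀ : Fin (n+1) → (directProd B).carrier) k j))).2 = _
        erw [hinterp, hgf]
        show (A₂ j).interp t (fun i => ((e j).symm ((Fin.snoc s s₀ : Fin (n+1) → (directProd B).carrier) i.castSucc j)).2)
          = (A₂ j).interp t (fun k => y k j)
        congr 1
        funext i
        rw [Fin.snoc_castSucc]
        exact hsy i j
    -- mixing : combining first coordinates of s with second coordinates of s'
    have hmix : ∀ s ∈ S, ∀ s' ∈ S,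
        (fun j => φ j (((e j).symm (s j)).1, ((e j).symm (s' j)).2)) ∈ S := by
      intro s hsS s' hs'S
      have h := hS 2 ((Term.var 0, Term.var 1)) ![s, s'] (by
        intro i
        fin_cases i <;> simpa)
      refine (congrArg (· ∈ S) ?_).mpr h
      funext j
      show φ j _ = (B j).interp (n := 2) ((Term.var 0, Term.var 1)) (fun k => ![s, s'] k j)
      erw [hinterp]
      rfl
    -- the matrices in K₁ and K₂
    have hsurj₁ : ∀ j, Function.Surjective
        (fun z : (subAlg (directProd A₁) _ hcl₁).carrier => z.1 j) := by
      intro j a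
      obtain ⟨⟨s, hsS⟩, hsj⟩ := hsurj j (φ j (a, ((e j).symm (s₀ j)).2))
      refine ⟨⟨fun j' => ((e j').symm (s j')).1, s, hsS, fun j' => rfl⟩, ?_⟩
      show ((e j).symm (s j)).1 = a
      have hsj2 : s j = φ j (a, ((e j).symm (s₀ j)).2) := hsj
      rw [hsj2]; erw [hgf]
    have hsurj₂ : ∀ j, Function.Surjective
        (fun z : (subAlg (directProd A₂) _ hcl₂).carrier => z.1 j) := by
      intro j a
      obtain ⟨⟨s, hsS⟩, hsj⟩ := hsurj j (φ j (((e j).symm (s₀ j)).1, a))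
      refine ⟨⟨fun j' => ((e j').symm (s j')).2, s, hsS, fun j' => rfl⟩, ?_⟩
      show ((e j).symm (s j)).2 = a
      have hsj2 : s j = φ j (((e j).symm (s₀ j)).1, a) := hsj
      rw [hsj2]; erw [hgf]
    have hK₁' := h₁ J A₁ F₁ hK₁j _ hcl₁ hsurj₁
      (subAlg (directProd A₁) _ hcl₁)
      {x | ∀ j, x.1 j ∈ F₁ j} id
      ⟨Function.bijective_id, fun _ _ _ => rfl, fun _ => Iff.rfl⟩
    have hK₂' := h₂ J A₂ F₂ hK₂j _ hcl₂ hsurj₂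
      (subAlg (directProd A₂) _ hcl₂)
      {y | ∀ j, y.1 j ∈ F₂ j} id
      ⟨Function.bijective_id, fun _ _ _ => rfl, fun _ => Iff.rfl⟩
    -- the isomorphism
    have hmem : ∀ p : (prodAlg2 (subAlg (directProd A₁) _ hcl₁) (subAlg (directProd A₂) _ hcl₂)).carrier,
        (fun j => φ j (p.1.1 j, p.2.1 j)) ∈ S := by
      rintro ⟨⟨x, s, hsS, hsx⟩, ⟨y, s', hs'S, hs'y⟩⟩
      have h := hmix s hsS s' hs'S
      convert h using 1
      funext j
      rw [hsx j, hs'y j]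
    refine ⟨subAlg (directProd A₁) _ hcl₁, {x | ∀ j, x.1 j ∈ F₁ j},
      subAlg (directProd A₂) _ hcl₂, {y | ∀ j, y.1 j ∈ F₂ j},
      fun p => f ⟨fun j => φ j (p.1.1 j, p.2.1 j), hmem p⟩, hK₁', hK₂', ?_, ?_, ?_⟩
    · -- bijectivity
      have hΦbij : Function.Bijective
          (fun p : (prodAlg2 (subAlg (directProd A₁) _ hcl₁) (subAlg (directProd A₂) _ hcl₂)).carrier
            => (⟨fun j => φ j (p.1.1 j, p.2.1 j), hmem p⟩ :
                (subAlg (directProd B) S hS).carrier)) := by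
        constructor
        · rintro ⟨x, y⟩ ⟨x', y'⟩ hpq
          have h : ∀ j, φ j (x.1 j, y.1 j) = φ j (x'.1 j, y'.1 j) := fun j =>
            congrFun (congrArg Subtype.val hpq) j
          have h' : ∀ j, (x.1 j, y.1 j) = (x'.1 j, y'.1 j) := fun j => (hφ j).1.1 (h j)
          have hx : x = x' := Subtype.ext (funext fun j => congrArg Prod.fst (h' j))
          have hy : y = y' := Subtype.ext (funext fun j => congrArg Prod.snd (h' j))
          rw [hx, hy]
        · rintro ⟨s, hsS⟩
          refine ⟨(⟨fun j => ((e j).symm (s j)).1, s, hsS, fun j => rfl⟩,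
                   ⟨fun j => ((e j).symm (s j)).2, s, hsS, fun j => rfl⟩), ?_⟩
          apply Subtype.ext
          funext j
          show φ j (((e j).symm (s j)).1, ((e j).symm (s j)).2) = s j
          rw [show (((e j).symm (s j)).1, ((e j).symm (s j)).2) = (e j).symm (s j) from rfl, hfg]
      exact hIso.1.comp hΦbij
    · -- operation preservation
      intro n op x
      have key : (⟨fun j => φ j (((prodAlg2 _ _).interp op x).1.1 j,
              ((prodAlg2 _ _).interp op x).2.1 j),
            hmem _⟩ : (subAlg (directProd B) S hS).carrier)
          = (subAlg (directProd B) S hS).interp op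
              (fun i => ⟨fun j => φ j ((x i).1.1 j, (x i).2.1 j), hmem (x i)⟩) := by
        apply Subtype.ext
        funext j
        show φ j _ = (B j).interp op
          (fun i => φ j ((x i).1.1 j, (x i).2.1 j))
        rw [hinterp]
        congr 1
        show ((Term.eval (subAlg (directProd A₁) _ hcl₁) (fun k => (x k).1) op.1).1 j,
              (Term.eval (subAlg (directProd A₂) _ hcl₂) (fun k => (x k).2) op.2).1 j)
            = (prodAlg2 (A₁ j) (A₂ j)).interp op
                (fun i => (e j).symm (φ j ((x i).1.1 j, (x i).2.1 j)))
        have h1 : ∀ i, (e j).symm (φ j ((x i).1.1 j, (x i).2.1 j))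
            = ((x i).1.1 j, (x i).2.1 j) := fun i => hgf j _
        rw [funext h1]
        show _ = (Term.eval (A₁ j) (fun i => (x i).1.1 j) op.1,
                  Term.eval (A₂ j) (fun i => (x i).2.1 j) op.2)
        rw [eval_subAlg, eval_subAlg, eval_directProd, eval_directProd]
      exact (congrArg f key).trans (hIso.2.1 n op _)
    · -- filters
      intro p
      show p.1 ∈ _ ∧ p.2 ∈ _ ↔ _
      constructor
      · rintro ⟨hp₁, hp₂⟩
        apply (hIso.2.2 _).mp
        intro j
        show φ j (p.1.1 j, p.2.1 j) ∈ G j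
        exact ((hφ j).2.2 _).mp ⟨hp₁ j, hp₂ j⟩
      · intro hH
        have h := (hIso.2.2 _).mpr hH
        constructor
        · intro j
          exact (((hφ j).2.2 _).mpr (h j)).1
        · intro j
          exact (((hφ j).2.2 _).mpr (h j)).2
  · -- degenerate case : S is empty
    rw [Set.not_nonempty_iff_eq_empty] at hne
    subst hne
    have hCempty : IsEmpty C.carrier := by
      constructor
      intro c
      obtain ⟨s, _⟩ := hIso.1.2 c
      exact s.2
    have h0 : IsEmpty (Term L₁ (Fin 0) × Term L₂ (Fin 0)) := by
      constructor
      intro op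
      exact hS 0 op Fin.elim0 (fun i => i.elim0)
    rcases isEmpty_prod.mp h0 with hT | hT
    · -- no closed terms in L₁
      have hops : IsEmpty (L₁.ops 0) := ⟨fun op => hT.false (Term.op op Fin.elim0)⟩
      -- empty member of K₁
      have hcl₁ : OpClosed (directProd (fun j : Empty => (j.elim : Alg L₁)))
          (∅ : Set _) := by
        intro n t x hx
        cases n with
        | zero => exact (hops.false t).elim
        | succ m => exact absurd (hx 0) (Set.notMem_empty _)
      have hK₁' := h₁ Empty (fun j => j.elim) (fun j => j.elim) (fun j => j.elim)
        ∅ hcl₁ (fun j => j.elim) (subAlg _ ∅ hcl₁) _ id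
        ⟨Function.bijective_id, fun _ _ _ => rfl, fun _ => Iff.rfl⟩
      -- trivial member of K₂
      have hcl₂ : OpClosed (directProd (fun j : Empty => (j.elim : Alg L₂)))
          (Set.univ : Set _) := fun _ _ _ _ => Set.mem_univ _
      have hK₂' := h₂ Empty (fun j => j.elim) (fun j => j.elim) (fun j => j.elim)
        Set.univ hcl₂ (fun j => j.elim) (subAlg _ Set.univ hcl₂)
        _ id
        ⟨Function.bijective_id, fun _ _ _ => rfl, fun _ => Iff.rfl⟩
      refine ⟨subAlg _ ∅ hcl₁, _,
        subAlg _ Set.univ hcl₂, _,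
        fun p => absurd p.1.2 (Set.notMem_empty _), hK₁', hK₂', ?_, ?_, ?_⟩
      · constructor
        · intro a
          exact absurd a.1.2 (Set.notMem_empty _)
        · intro c
          exact (hCempty.false c).elim
      · intro n op x
        cases n with
        | zero => exact (hT.false op.1).elim
        | succ m => exact absurd (x 0).1.2 (Set.notMem_empty _)
      · intro a
        exact absurd a.1.2 (Set.notMem_empty _)
    · -- no closed terms in L₂
      have hops : IsEmpty (L₂.ops 0) := ⟨fun op => hT.false (Term.op op Fin.elim0)⟩
      have hcl₂ : OpClosed (directProd (fun j : Empty => (j.elim : Alg L₂)))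
          (∅ : Set _) := by
        intro n t x hx
        cases n with
        | zero => exact (hops.false t).elim
        | succ m => exact absurd (hx 0) (Set.notMem_empty _)
      have hK₂' := h₂ Empty (fun j => j.elim) (fun j => j.elim) (fun j => j.elim)
        ∅ hcl₂ (fun j => j.elim) (subAlg _ ∅ hcl₂) _ id
        ⟨Function.bijective_id, fun _ _ _ => rfl, fun _ => Iff.rfl⟩
      have hcl₁ : OpClosed (directProd (fun j : Empty => (j.elim : Alg L₁)))
          (Set.univ : Set _) := fun _ _ _ _ => Set.mem_univ _
      have hK₁' := h₁ Empty (fun j => j.elim) (fun j => j.elim) (fun j => j.elim)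
        Set.univ hcl₁ (fun j => j.elim) (subAlg _ Set.univ hcl₁)
        _ id
        ⟨Function.bijective_id, fun _ _ _ => rfl, fun _ => Iff.rfl⟩
      refine ⟨subAlg _ Set.univ hcl₁, _,
        subAlg _ ∅ hcl₂, _,
        fun p => absurd p.2.2 (Set.notMem_empty _), hK₁', hK₂', ?_, ?_, ?_⟩
      · constructor
        · intro a
          exact absurd a.2.2 (Set.notMem_empty _)
        · intro c
          exact (hCempty.false c).elim
      · intro n op x
        cases n with
        | zero => exact (hT.false op.2).elim
        | succ m => exact absurd (x 0).2.2 (Set.notMem_empty _)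
      · intro a
        exact absurd a.2.2 (Set.notMem_empty _)
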